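/- (Youla symmetrization for 2×2 blocks.) Let σ ≥ 0 and consider the 2×2 skew block J = [[0, σ],[-σ, 0]] and its symmetrization Ĵ = [[σ, 0],[0, σ]] = σI_2. Then for a block diagonal skew-symmetric matrix A = Diag(J_1, …, J_{d/2}) with blocks J_i = [[0, σ_i],[-σ_i, 0]], σ_i ≥ 0, and its symmetrization = Diag(σ_1 I_2, …, σ_{d/2} I_2), every principal minor satisfies det(A_T) ≤ det(Â_T) for all T ⊆ [d]. -/

import Mathlib

open Matrix

/-- Principal submatrix of `A` indexed by `S`. -/
def pSub {ι : Type*} [DecidableEq ι] (A : Matrix ι ι ℝ) (S : Finset ι) :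
    Matrix S S ℝ := A.submatrix (fun i => (i : ι)) (fun j => (j : ι))


private def tw (r : ℕ) : Equiv.Perm (Fin 2 × Fin r) :=
  (Equiv.swap (0:Fin 2) 1).prodCongr (Equiv.refl (Fin r))

private def sg {r : ℕ} (p : Fin 2 × Fin r) : ℝ := if p.1 = 0 then 1 else -1

private lemma tw_tw {r : ℕ} (p : Fin 2 × Fin r) : tw r (tw r p) = p := by
  rcases p with ⟨k,i⟩; simp [tw, Equiv.swap_apply_self]

private lemma S_apply {r : ℕ} (p q : Fin 2 × Fin r) :
    blockDiagonal (fun _ : Fin r => !![(0:ℝ),1;-1,0]) p q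
      = if q = tw r p then sg p else 0 := by
  rcases p with ⟨k,i⟩; rcases q with ⟨l,j⟩
  fin_cases k <;> fin_cases l <;>
    by_cases h : i = j <;>
    simp_all [blockDiagonal_apply, tw, sg, Prod.ext_iff, eq_comm]

private lemma S_det_le_one {r : ℕ} (T : Finset (Fin 2 × Fin r)) :
    (pSub (blockDiagonal fun _ : Fin r => !![(0:ℝ),1;-1,0]) T).det ≤ 1 := by
  by_cases hclosed : ∀ p ∈ T, tw r p ∈ T
  · have hiff : ∀ p, p ∈ T ↔ tw r p ∈ T := by
      intro p
      constructor
      · exact hclosed p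
      · intro h; have := hclosed _ h; rwa [tw_tw] at this
    let e : Equiv.Perm {x // x ∈ T} := (tw r).subtypePerm (fun p => (hiff p).symm)
    have hfac : pSub (blockDiagonal fun _ : Fin r => !![(0:ℝ),1;-1,0]) T
        = diagonal (fun p : {x // x ∈ T} => sg (p : Fin 2 × Fin r)) * e.permMatrix ℝ := by
      ext p q
      have hcoe : ((e p : {x // x ∈ T}) : Fin 2 × Fin r) = tw r (p : Fin 2 × Fin r) := rfl
      have hperm : e.permMatrix ℝ p q
          = if (q : Fin 2 × Fin r) = tw r (p : Fin 2 × Fin r) then (1:ℝ) else 0 := by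
        rw [Equiv.Perm.permMatrix, PEquiv.toMatrix_apply, Equiv.toPEquiv_apply]
        simp only [Option.mem_def, Option.some.injEq, Subtype.ext_iff, hcoe, eq_comm]
      rw [Matrix.diagonal_mul, hperm]
      simp only [pSub, submatrix_apply, S_apply]
      split <;> simp
    rw [hfac, det_mul, det_diagonal, Matrix.det_permutation]
    calc _ ≤ |(∏ p : {x // x ∈ T}, sg (p : Fin 2 × Fin r)) * ((Equiv.Perm.sign e : ℤ) : ℝ)| :=
          le_abs_self _
      _ = 1 := by
          rw [abs_mul, Finset.abs_prod]
          have h1 : ∀ p : {x // x ∈ T}, |sg (p : Fin 2 × Fin r)| = 1 := by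
            intro p; unfold sg; split <;> simp
          rcases Int.units_eq_one_or (Equiv.Perm.sign e) with h | h <;>
            simp [h1, h]
  · push_neg at hclosed
    obtain ⟨p, hpT, hpτ⟩ := hclosed
    have : (pSub (blockDiagonal fun _ : Fin r => !![(0:ℝ),1;-1,0]) T).det = 0 := by
      apply Matrix.det_eq_zero_of_row_eq_zero ⟨p, hpT⟩
      intro q
      simp only [pSub, submatrix_apply, S_apply]
      rw [if_neg]
      intro hh
      exact hpτ (hh ▸ q.2)
    rw [this]; norm_num

/-- Youla symmetrization for `2 × 2` blocks: for the block-diagonal skew-symmetric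
matrix with blocks `[[0, σᵢ], [-σᵢ, 0]]` and its symmetrization with blocks `σᵢ I₂`,
every principal minor of the former is at most that of the latter. -/
theorem blockDiag_youla_minor_le {r : ℕ} (σ : Fin r → ℝ) (hσ : ∀ i, 0 ≤ σ i)
    (T : Finset (Fin 2 × Fin r)) :
    (pSub (Matrix.blockDiagonal (fun i => !![0, σ i; -σ i, 0])) T).det
      ≤ (pSub (Matrix.blockDiagonal (fun i => σ i • (1 : Matrix (Fin 2) (Fin 2) ℝ))) T).det := by
  have hAhat : Matrix.blockDiagonal (fun i => σ i • (1 : Matrix (Fin 2) (Fin 2) ℝ))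
      = diagonal (fun p : Fin 2 × Fin r => σ p.2) := by
    ext ⟨k,i⟩ ⟨l,j⟩
    by_cases h : i = j <;>
      simp_all [blockDiagonal_apply, diagonal, Prod.ext_iff, one_apply]
  have hA : Matrix.blockDiagonal (fun i => !![0, σ i; -σ i, 0])
      = diagonal (fun p : Fin 2 × Fin r => σ p.2)
          * blockDiagonal (fun _ : Fin r => !![(0:ℝ),1;-1,0]) := by
    ext ⟨k,i⟩ ⟨l,j⟩
    rw [Matrix.diagonal_mul]
    by_cases h : i = j <;>
      fin_cases k <;> fin_cases l <;>
      simp_all [blockDiagonal_apply]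
  have hsub : pSub (diagonal (fun p : Fin 2 × Fin r => σ p.2)
          * blockDiagonal (fun _ : Fin r => !![(0:ℝ),1;-1,0])) T
      = diagonal (fun p : {x // x ∈ T} => σ (p : Fin 2 × Fin r).2)
          * pSub (blockDiagonal (fun _ : Fin r => !![(0:ℝ),1;-1,0])) T := by
    ext p q
    rw [Matrix.diagonal_mul]
    simp [pSub, Matrix.diagonal_mul]
  have hsub2 : pSub (diagonal (fun p : Fin 2 × Fin r => σ p.2)) T
      = diagonal (fun p : {x // x ∈ T} => σ (p : Fin 2 × Fin r).2) := by
    unfold pSub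
    rw [Matrix.submatrix_diagonal _ _ Subtype.coe_injective]
    rfl
  have hprod : 0 ≤ ∏ p : {x // x ∈ T}, σ (p : Fin 2 × Fin r).2 :=
    Finset.prod_nonneg (fun p _ => hσ _)
  rw [hA, hAhat, hsub, hsub2, det_mul, det_diagonal]
  calc (∏ p : {x // x ∈ T}, σ (p : Fin 2 × Fin r).2)
        * (pSub (blockDiagonal fun _ : Fin r => !![(0:ℝ),1;-1,0]) T).det
      ≤ (∏ p : {x // x ∈ T}, σ (p : Fin 2 × Fin r).2) * 1 :=
        mul_le_mul_of_nonneg_left (S_det_le_one T) hprod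
    _ = _ := by rw [mul_one]
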